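/- (Mutual disentanglement of optimal representations.) Let V, T be random variables, and let V_S = f_S(V) and V_X = f_X(V) be deterministic functions of V. If I(V; V_S | T) = 0 and I(T; V_X) = 0, then I(V_S; V_X) = 0. Symmetrically, if T_S = g_S(T) and T_X = g_X(T) are deterministic functions of T with I(T; T_S | V) = 0 and I(V; T_X) = 0, then I(T_S; T_X) = 0. -/

import Mathlib

open MeasureTheory ProbabilityTheory

namespace DisNCL

variable {Ω : Type*} [MeasurableSpace Ω]

/-- The probability that a random variable `X` takes the value `x`. -/
noncomputable def pr {S : Type*} (μ : Measure Ω) (X : Ω → S) (x : S) : ℝ :=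
  (μ {ω | X ω = x}).toReal

/-- Shannon entropy `H(X)` of a finitely-valued random variable. -/
noncomputable def H {S : Type*} [Fintype S] (μ : Measure Ω) (X : Ω → S) : ℝ :=
  -∑ x, pr μ X x * Real.log (pr μ X x)

/-- Conditional entropy `H(X | Y) = ∑ y P(Y = y) H(X | Y = y)`, where the inner entropy
is taken under the conditional measure given `Y = y`. -/
noncomputable def condH {S T : Type*} [Fintype S] [Fintype T]
    (μ : Measure Ω) (X : Ω → S) (Y : Ω → T) : ℝ :=
  ∑ y, pr μ Y y * H (ProbabilityTheory.cond μ {ω | Y ω = y}) X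

/-- Mutual information `I(X;Y) = H(X) + H(Y) - H(X,Y)`. -/
noncomputable def MI {S T : Type*} [Fintype S] [Fintype T]
    (μ : Measure Ω) (X : Ω → S) (Y : Ω → T) : ℝ :=
  H μ X + H μ Y - H μ (fun ω => (X ω, Y ω))

/-- Conditional mutual information `I(X;Y|Z) = ∑ z P(Z = z) I(X;Y | Z = z)`, where the
inner mutual information is taken under the conditional measure given `Z = z`. -/
noncomputable def CMI {S T U : Type*} [Fintype S] [Fintype T] [Fintype U]
    (μ : Measure Ω) (X : Ω → S) (Y : Ω → T) (Z : Ω → U) : ℝ :=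
  ∑ z, pr μ Z z * MI (ProbabilityTheory.cond μ {ω | Z ω = z}) X Y

/-- `X` and `Y` are conditionally independent given `Z`
(written `X ⊥ Y | Z`): for all values,
`P(X = x, Y = y, Z = z) ⬝ P(Z = z) = P(X = x, Z = z) ⬝ P(Y = y, Z = z)`. -/
def CondIndep {S T U : Type*} (μ : Measure Ω) (X : Ω → S) (Y : Ω → T) (Z : Ω → U) : Prop :=
  ∀ (x : S) (y : T) (z : U),
    pr μ (fun ω => (X ω, Y ω, Z ω)) (x, y, z) * pr μ Z z =
      pr μ (fun ω => (X ω, Z ω)) (x, z) * pr μ (fun ω => (Y ω, Z ω)) (y, z)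

section Aux

variable {S T U : Type*}

lemma pr_nonneg (μ : Measure Ω) (X : Ω → S) (x : S) : 0 ≤ pr μ X x := ENNReal.toReal_nonneg

lemma pr_mono (μ : Measure Ω) [IsFiniteMeasure μ] {X : Ω → S} {Y : Ω → T} {x : S} {y : T}
    (h : {ω | X ω = x} ⊆ {ω | Y ω = y}) : pr μ X x ≤ pr μ Y y :=
  ENNReal.toReal_mono (measure_ne_top μ _) (measure_mono h)

lemma pr_pair_le_left (μ : Measure Ω) [IsFiniteMeasure μ] (X : Ω → S) (Y : Ω → T) (x : S) (y : T) :
    pr μ (fun ω => (X ω, Y ω)) (x, y) ≤ pr μ X x :=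
  pr_mono μ (fun ω h => congrArg Prod.fst h)

lemma pr_pair_le_right (μ : Measure Ω) [IsFiniteMeasure μ] (X : Ω → S) (Y : Ω → T) (x : S) (y : T) :
    pr μ (fun ω => (X ω, Y ω)) (x, y) ≤ pr μ Y y :=
  pr_mono μ (fun ω h => congrArg Prod.snd h)

lemma pr_swap (μ : Measure Ω) (X : Ω → S) (Y : Ω → T) (x : S) (y : T) :
    pr μ (fun ω => (X ω, Y ω)) (x, y) = pr μ (fun ω => (Y ω, X ω)) (y, x) := by
  unfold pr
  congr 1
  congr 1
  ext ω
  simp [Prod.ext_iff, and_comm]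

lemma measurableSet_pair {X : Ω → S} {Y : Ω → T}
    (hX : ∀ x, MeasurableSet {ω | X ω = x}) (hY : ∀ y, MeasurableSet {ω | Y ω = y}) :
    ∀ p : S × T, MeasurableSet {ω | (X ω, Y ω) = p} := by
  rintro ⟨x, y⟩
  have : {ω | (X ω, Y ω) = (x, y)} = {ω | X ω = x} ∩ {ω | Y ω = y} := by
    ext ω; simp [Prod.ext_iff]
  rw [this]; exact (hX x).inter (hY y)

lemma sum_pr_eq_one [Fintype S] (μ : Measure Ω) [IsProbabilityMeasure μ] (X : Ω → S)
    (hX : ∀ x, MeasurableSet {ω | X ω = x}) : ∑ x, pr μ X x = 1 := by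
  classical
  have hdisj : ((Finset.univ : Finset S) : Set S).PairwiseDisjoint (fun x => {ω | X ω = x}) := by
    intro i _ j _ hij
    simp only [Function.onFun, Set.disjoint_left]
    rintro ω (h1 : X ω = i) (h2 : X ω = j)
    exact hij (h1 ▸ h2)
  have h : ∑ x, μ {ω | X ω = x} = 1 := by
    rw [← measure_biUnion_finset hdisj (fun x _ => hX x)]
    have : (⋃ x ∈ (Finset.univ : Finset S), {ω | X ω = x}) = Set.univ := by
      ext ω; simp
    rw [this, measure_univ]
  unfold pr
  rw [← ENNReal.toReal_sum (fun a _ => measure_ne_top μ _), h, ENNReal.toReal_one]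

lemma pr_comp [Fintype S] [DecidableEq U] (μ : Measure Ω) [IsFiniteMeasure μ] (X : Ω → S)
    (hX : ∀ x, MeasurableSet {ω | X ω = x}) (φ : S → U) (u : U) :
    pr μ (fun ω => φ (X ω)) u = ∑ v, if φ v = u then pr μ X v else 0 := by
  classical
  have hdisj : (((Finset.univ.filter (fun v => φ v = u)) : Finset S) : Set S).PairwiseDisjoint
      (fun x => {ω | X ω = x}) := by
    intro i _ j _ hij
    simp only [Function.onFun, Set.disjoint_left]
    rintro ω (h1 : X ω = i) (h2 : X ω = j)
    exact hij (h1 ▸ h2)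
  have hset : {ω | φ (X ω) = u} = ⋃ v ∈ Finset.univ.filter (fun v => φ v = u), {ω | X ω = v} := by
    ext ω; simp
  unfold pr
  rw [hset, measure_biUnion_finset hdisj (fun v _ => hX v),
    ENNReal.toReal_sum (fun a _ => measure_ne_top μ _), ← Finset.sum_filter]

lemma pr_fst [Fintype T] (μ : Measure Ω) [IsFiniteMeasure μ] (X : Ω → S) (Y : Ω → T)
    (hX : ∀ x, MeasurableSet {ω | X ω = x}) (hY : ∀ y, MeasurableSet {ω | Y ω = y})
    [Fintype S] [DecidableEq S] (x : S) :
    pr μ X x = ∑ y, pr μ (fun ω => (X ω, Y ω)) (x, y) := by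
  classical
  have h := pr_comp μ (fun ω => (X ω, Y ω)) (measurableSet_pair hX hY) Prod.fst x
  have h2 : pr μ (fun ω => (X ω, Y ω).1) x = pr μ X x := rfl
  rw [h2] at h
  rw [h, Fintype.sum_prod_type]
  rw [Finset.sum_comm]
  simp

lemma pr_cond (μ : Measure Ω) (Z : Ω → U) (hZ : ∀ z, MeasurableSet {ω | Z ω = z}) (z : U)
    (X : Ω → S) (x : S) :
    pr (μ[|{ω | Z ω = z}]) X x = pr μ (fun ω => (X ω, Z ω)) (x, z) / pr μ Z z := by
  unfold pr
  rw [cond_apply (hZ z) μ]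
  have : {ω | Z ω = z} ∩ {ω | X ω = x} = {ω | (X ω, Z ω) = (x, z)} := by
    ext ω; simp [Prod.ext_iff, and_comm]
  rw [this, ENNReal.toReal_mul, ENNReal.toReal_inv, inv_mul_eq_div]

lemma pr_total [Fintype U] [Fintype S] (μ : Measure Ω) [IsProbabilityMeasure μ]
    (X : Ω → S) (Z : Ω → U)
    (hX : ∀ x, MeasurableSet {ω | X ω = x}) (hZ : ∀ z, MeasurableSet {ω | Z ω = z}) (x : S) :
    pr μ X x = ∑ z, pr μ Z z * pr (μ[|{ω | Z ω = z}]) X x := by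
  classical
  rw [pr_fst μ X Z hX hZ x]
  refine Finset.sum_congr rfl (fun z _ => ?_)
  rw [pr_cond μ Z hZ z X x]
  by_cases hz : pr μ Z z = 0
  · have h0 : pr μ (fun ω => (X ω, Z ω)) (x, z) = 0 :=
      le_antisymm (hz ▸ pr_pair_le_right μ X Z x z) (pr_nonneg _ _ _)
    rw [h0, hz]; simp
  · field_simp

end Aux

lemma gibbs {S : Type*} [Fintype S] (p q : S → ℝ)
    (hp : ∀ x, 0 ≤ p x) (hq : ∀ x, 0 ≤ q x)
    (hp1 : ∑ x, p x = 1) (hq1 : ∑ x, q x = 1)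
    (hpq : ∀ x, p x ≠ 0 → q x ≠ 0) :
    (∑ x, p x * Real.log (q x) ≤ ∑ x, p x * Real.log (p x)) ∧
      ((∑ x, p x * Real.log (q x)) = (∑ x, p x * Real.log (p x)) → ∀ x, p x = q x) := by
  classical
  have key : ∀ x, p x * (Real.log (q x) - Real.log (p x)) ≤ q x - p x := by
    intro x
    rcases eq_or_lt_of_le (hp x) with h0 | h0
    · rw [← h0]; simpa using hq x
    · have hqx : 0 < q x := lt_of_le_of_ne (hq x) (Ne.symm (hpq x (ne_of_gt h0)))
      have hlog : Real.log (q x / p x) ≤ q x / p x - 1 :=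
        Real.log_le_sub_one_of_pos (div_pos hqx h0)
      rw [Real.log_div (ne_of_gt hqx) (ne_of_gt h0)] at hlog
      have := mul_le_mul_of_nonneg_left hlog (le_of_lt h0)
      calc p x * (Real.log (q x) - Real.log (p x)) ≤ p x * (q x / p x - 1) := this
        _ = q x - p x := by field_simp
  have hsum : ∑ x, (q x - p x - p x * (Real.log (q x) - Real.log (p x))) =
      -(∑ x, p x * Real.log (q x)) + (∑ x, p x * Real.log (p x)) := by
    rw [Finset.sum_sub_distrib, Finset.sum_sub_distrib, hp1, hq1]
    have : ∑ x, p x * (Real.log (q x) - Real.log (p x)) =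
        (∑ x, p x * Real.log (q x)) - ∑ x, p x * Real.log (p x) := by
      rw [← Finset.sum_sub_distrib]
      exact Finset.sum_congr rfl (fun x _ => by ring)
    rw [this]; ring
  have hnn : ∀ x ∈ Finset.univ, 0 ≤ q x - p x - p x * (Real.log (q x) - Real.log (p x)) :=
    fun x _ => by linarith [key x]
  constructor
  · nlinarith [Finset.sum_nonneg hnn, hsum]
  · intro heq x
    have hzero : ∑ x ∈ Finset.univ, (q x - p x - p x * (Real.log (q x) - Real.log (p x))) = 0 := by
      rw [hsum, heq]; ring
    have := (Finset.sum_eq_zero_iff_of_nonneg hnn).mp hzero x (Finset.mem_univ x)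
    rcases eq_or_lt_of_le (hp x) with h0 | h0
    · -- p x = 0, so from term = 0: q x = 0
      rw [← h0] at this ⊢
      simp at this
      linarith
    · have hqx : 0 < q x := lt_of_le_of_ne (hq x) (Ne.symm (hpq x (ne_of_gt h0)))
      by_contra hne
      have hr : q x / p x ≠ 1 := by
        intro h1
        exact hne (by field_simp at h1; linarith)
      have hlog : Real.log (q x / p x) < q x / p x - 1 :=
        Real.log_lt_sub_one_of_pos (div_pos hqx h0) hr
      rw [Real.log_div (ne_of_gt hqx) (ne_of_gt h0)] at hlog
      have := mul_lt_mul_of_pos_left hlog h0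
      have h2 : p x * (q x / p x - 1) = q x - p x := by field_simp
      nlinarith

section MI
variable {S T : Type*} [Fintype S] [Fintype T]
  (μ : Measure Ω) [IsProbabilityMeasure μ] (X : Ω → S) (Y : Ω → T)
  (hX : ∀ x, MeasurableSet {ω | X ω = x}) (hY : ∀ y, MeasurableSet {ω | Y ω = y})
include hX hY

lemma MI_eq_sum :
    MI μ X Y = (∑ p : S × T, pr μ (fun ω => (X ω, Y ω)) p *
        Real.log (pr μ (fun ω => (X ω, Y ω)) p)) -
      ∑ p : S × T, pr μ (fun ω => (X ω, Y ω)) p * Real.log (pr μ X p.1 * pr μ Y p.2) := by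
  classical
  have hHX : H μ X = -∑ p : S × T, pr μ (fun ω => (X ω, Y ω)) p * Real.log (pr μ X p.1) := by
    unfold H
    congr 1
    rw [Fintype.sum_prod_type]
    refine Finset.sum_congr rfl (fun x _ => ?_)
    have hx : pr μ X x * Real.log (pr μ X x) =
        ∑ y, pr μ (fun ω => (X ω, Y ω)) (x, y) * Real.log (pr μ X x) := by
      rw [← Finset.sum_mul, ← pr_fst μ X Y hX hY x]
    rw [hx]
  have hHY : H μ Y = -∑ p : S × T, pr μ (fun ω => (X ω, Y ω)) p * Real.log (pr μ Y p.2) := by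
    unfold H
    congr 1
    rw [Fintype.sum_prod_type_right]
    refine Finset.sum_congr rfl (fun y _ => ?_)
    have hmarg : pr μ Y y = ∑ x, pr μ (fun ω => (X ω, Y ω)) (x, y) := by
      rw [pr_fst μ Y X hY hX y]
      exact Finset.sum_congr rfl (fun x _ => pr_swap μ Y X y x)
    have hy : pr μ Y y * Real.log (pr μ Y y) =
        ∑ x, pr μ (fun ω => (X ω, Y ω)) (x, y) * Real.log (pr μ Y y) := by
      rw [← Finset.sum_mul, ← hmarg]
    rw [hy]
  have hHP : H μ (fun ω => (X ω, Y ω)) =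
      -∑ p : S × T, pr μ (fun ω => (X ω, Y ω)) p *
        Real.log (pr μ (fun ω => (X ω, Y ω)) p) := rfl
  have hQ : ∑ p : S × T, pr μ (fun ω => (X ω, Y ω)) p * Real.log (pr μ X p.1 * pr μ Y p.2) =
      (∑ p : S × T, pr μ (fun ω => (X ω, Y ω)) p * Real.log (pr μ X p.1)) +
        ∑ p : S × T, pr μ (fun ω => (X ω, Y ω)) p * Real.log (pr μ Y p.2) := by
    rw [← Finset.sum_add_distrib]
    refine Finset.sum_congr rfl (fun p _ => ?_)
    by_cases hp : pr μ (fun ω => (X ω, Y ω)) p = 0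
    · rw [hp]; ring
    · have hx : pr μ X p.1 ≠ 0 := by
        have hle := pr_pair_le_left μ X Y p.1 p.2
        have h0 := pr_nonneg μ (fun ω => (X ω, Y ω)) p
        intro h; rw [h] at hle
        exact hp (le_antisymm (by simpa using hle) h0)
      have hy : pr μ Y p.2 ≠ 0 := by
        have hle := pr_pair_le_right μ X Y p.1 p.2
        have h0 := pr_nonneg μ (fun ω => (X ω, Y ω)) p
        intro h; rw [h] at hle
        exact hp (le_antisymm (by simpa using hle) h0)
      rw [Real.log_mul hx hy]; ring
  unfold MI
  rw [hHX, hHY, hHP, hQ]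
  ring

lemma MI_nonneg : 0 ≤ MI μ X Y := by
  classical
  rw [MI_eq_sum μ X Y hX hY]
  have h := gibbs (fun p : S × T => pr μ (fun ω => (X ω, Y ω)) p)
    (fun p => pr μ X p.1 * pr μ Y p.2)
    (fun p => pr_nonneg μ _ p)
    (fun p => mul_nonneg (pr_nonneg μ _ _) (pr_nonneg μ _ _))
    (sum_pr_eq_one μ _ (measurableSet_pair hX hY))
    (by rw [Fintype.sum_prod_type, ← Finset.sum_mul_sum, sum_pr_eq_one μ X hX,
          sum_pr_eq_one μ Y hY, one_mul])
    (fun p hp => by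
      have hx : pr μ X p.1 ≠ 0 := by
        have := pr_pair_le_left μ X Y p.1 p.2
        have h0 := pr_nonneg μ (fun ω => (X ω, Y ω)) p
        intro h; rw [h] at this
        exact hp (le_antisymm (by simpa using this) h0)
      have hy : pr μ Y p.2 ≠ 0 := by
        have := pr_pair_le_right μ X Y p.1 p.2
        have h0 := pr_nonneg μ (fun ω => (X ω, Y ω)) p
        intro h; rw [h] at this
        exact hp (le_antisymm (by simpa using this) h0)
      exact mul_ne_zero hx hy)
  linarith [h.1]

lemma MI_eq_zero_of_indep
    (hind : ∀ x y, pr μ (fun ω => (X ω, Y ω)) (x, y) = pr μ X x * pr μ Y y) :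
    MI μ X Y = 0 := by
  rw [MI_eq_sum μ X Y hX hY]
  have heq : ∀ p : S × T, pr μ (fun ω => (X ω, Y ω)) p = pr μ X p.1 * pr μ Y p.2 :=
    fun p => hind p.1 p.2
  have h1 : (∑ p : S × T, pr μ (fun ω => (X ω, Y ω)) p *
      Real.log (pr μ (fun ω => (X ω, Y ω)) p)) =
      ∑ p : S × T, pr μ (fun ω => (X ω, Y ω)) p * Real.log (pr μ X p.1 * pr μ Y p.2) :=
    Finset.sum_congr rfl (fun p _ => by rw [heq p])
  rw [h1, sub_self]

lemma indep_of_MI_eq_zero (h : MI μ X Y = 0) :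
    ∀ x y, pr μ (fun ω => (X ω, Y ω)) (x, y) = pr μ X x * pr μ Y y := by
  classical
  rw [MI_eq_sum μ X Y hX hY] at h
  have hg := gibbs (fun p : S × T => pr μ (fun ω => (X ω, Y ω)) p)
    (fun p => pr μ X p.1 * pr μ Y p.2)
    (fun p => pr_nonneg μ _ p)
    (fun p => mul_nonneg (pr_nonneg μ _ _) (pr_nonneg μ _ _))
    (sum_pr_eq_one μ _ (measurableSet_pair hX hY))
    (by rw [Fintype.sum_prod_type, ← Finset.sum_mul_sum, sum_pr_eq_one μ X hX,
          sum_pr_eq_one μ Y hY, one_mul])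
    (fun p hp => by
      have hx : pr μ X p.1 ≠ 0 := by
        have := pr_pair_le_left μ X Y p.1 p.2
        have h0 := pr_nonneg μ (fun ω => (X ω, Y ω)) p
        intro h; rw [h] at this
        exact hp (le_antisymm (by simpa using this) h0)
      have hy : pr μ Y p.2 ≠ 0 := by
        have := pr_pair_le_right μ X Y p.1 p.2
        have h0 := pr_nonneg μ (fun ω => (X ω, Y ω)) p
        intro h; rw [h] at this
        exact hp (le_antisymm (by simpa using this) h0)
      exact mul_ne_zero hx hy)
  intro x y
  exact hg.2 (by linarith) (x, y)

end MI


section Key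

lemma key {SV ST AS AX : Type*}
    [Fintype SV] [MeasurableSpace SV] [MeasurableSingletonClass SV]
    [Fintype ST] [MeasurableSpace ST] [MeasurableSingletonClass ST]
    [Fintype AS] [Fintype AX]
    (μ : Measure Ω) [IsProbabilityMeasure μ]
    (V : Ω → SV) (T : Ω → ST) (hV : Measurable V) (hT : Measurable T)
    (fS : SV → AS) (fX : SV → AX)
    (h1 : CMI μ V (fun ω => fS (V ω)) T = 0)
    (h2 : MI μ T (fun ω => fX (V ω)) = 0) :
    MI μ (fun ω => fS (V ω)) (fun ω => fX (V ω)) = 0 := by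
  classical
  have hVm : ∀ v, MeasurableSet {ω | V ω = v} := fun v => hV (MeasurableSet.singleton v)
  have hTm : ∀ t, MeasurableSet {ω | T ω = t} := fun t => hT (MeasurableSet.singleton t)
  have hfS : ∀ a, MeasurableSet {ω | fS (V ω) = a} :=
    fun a => hV ((Set.to_countable (fS ⁻¹' {a})).measurableSet)
  have hfX : ∀ b, MeasurableSet {ω | fX (V ω) = b} :=
    fun b => hV ((Set.to_countable (fX ⁻¹' {b})).measurableSet)
  -- Step A: each conditional MI vanishes
  unfold CMI at h1
  have hterms : ∀ t ∈ Finset.univ,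
      0 ≤ pr μ T t * MI (μ[|{ω | T ω = t}]) V (fun ω => fS (V ω)) := by
    intro t _
    by_cases ht : pr μ T t = 0
    · rw [ht, zero_mul]
    · have hμt : μ {ω | T ω = t} ≠ 0 := by
        intro h; apply ht; unfold pr; rw [h]; simp
      have : IsProbabilityMeasure (μ[|{ω | T ω = t}]) := cond_isProbabilityMeasure hμt
      exact mul_nonneg (pr_nonneg _ _ _) (MI_nonneg _ _ _ hVm hfS)
  have hzero : ∀ t, pr μ T t ≠ 0 →
      MI (μ[|{ω | T ω = t}]) V (fun ω => fS (V ω)) = 0 := by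
    intro t ht
    have := (Finset.sum_eq_zero_iff_of_nonneg hterms).mp h1 t (Finset.mem_univ t)
    rcases mul_eq_zero.mp this with h | h
    · exact absurd h ht
    · exact h
  -- Step B: conditional independence of fS(V) and fX(V) given T = t
  have hBB : ∀ t, pr μ T t ≠ 0 → ∀ a b,
      pr (μ[|{ω | T ω = t}]) (fun ω => (fS (V ω), fX (V ω))) (a, b) =
        pr (μ[|{ω | T ω = t}]) (fun ω => fS (V ω)) a *
          pr (μ[|{ω | T ω = t}]) (fun ω => fX (V ω)) b := by
    intro t ht a b
    set ν := μ[|{ω | T ω = t}] with hν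
    have hμt : μ {ω | T ω = t} ≠ 0 := by
      intro h; apply ht; unfold pr; rw [h]; simp
    have : IsProbabilityMeasure ν := cond_isProbabilityMeasure hμt
    have hind := indep_of_MI_eq_zero ν V (fun ω => fS (V ω)) hVm hfS (hzero t ht)
    have hstar : ∀ v a, (if fS v = a then pr ν V v else 0) =
        pr ν V v * pr ν (fun ω => fS (V ω)) a := by
      intro v a
      have hc := pr_comp ν V hVm (fun v => (v, fS v)) (v, a)
      have hc2 : (∑ w, if (w, fS w) = (v, a) then pr ν V w else 0) =
          if fS v = a then pr ν V v else 0 := by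
        rw [Finset.sum_eq_single v]
        · by_cases h : fS v = a <;> simp [h]
        · intro w _ hw
          simp [Prod.ext_iff, hw]
        · intro h; exact absurd (Finset.mem_univ v) h
      rw [← hind v a, hc, hc2]
    rw [pr_comp ν V hVm (fun v => (fS v, fX v)) (a, b)]
    have hterm : ∀ v, (if (fS v, fX v) = (a, b) then pr ν V v else 0) =
        (if fX v = b then pr ν V v else 0) * pr ν (fun ω => fS (V ω)) a := by
      intro v
      by_cases hb : fX v = b
      · by_cases ha : fS v = a
        · simp only [Prod.ext_iff, ha, hb, if_true, and_self]
          have := hstar v a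
          rw [ha] at this
          simpa using this
        · simp only [Prod.ext_iff, hb, and_true, ha, if_false, if_true]
          have := hstar v a
          rw [if_neg ha] at this
          rw [← this]
      · simp [Prod.ext_iff, hb]
    rw [Finset.sum_congr rfl (fun v _ => hterm v), ← Finset.sum_mul,
      ← pr_comp ν V hVm fX b]
    ring
  -- Step C: conditional law of fX(V) given T = t equals unconditional law
  have hTX := indep_of_MI_eq_zero μ T (fun ω => fX (V ω)) hTm hfX h2
  have hcondX : ∀ t, pr μ T t ≠ 0 → ∀ b,
      pr (μ[|{ω | T ω = t}]) (fun ω => fX (V ω)) b = pr μ (fun ω => fX (V ω)) b := by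
    intro t ht b
    rw [pr_cond μ T hTm t (fun ω => fX (V ω)) b, pr_swap μ (fun ω => fX (V ω)) T b t,
      hTX t b]
    field_simp
  -- Step D: conclude via total probability
  apply MI_eq_zero_of_indep μ (fun ω => fS (V ω)) (fun ω => fX (V ω)) hfS hfX
  intro a b
  rw [pr_total μ (fun ω => (fS (V ω), fX (V ω))) T (measurableSet_pair hfS hfX) hTm (a, b),
    pr_total μ (fun ω => fS (V ω)) T hfS hTm a, Finset.sum_mul]
  refine Finset.sum_congr rfl (fun t _ => ?_)
  by_cases ht : pr μ T t = 0
  · rw [ht, zero_mul, zero_mul, zero_mul]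
  · rw [hBB t ht a b, hcondX t ht b]
    ring

end Key

/-- **Mutual disentanglement.** If `V_S = f_S(V)` and `V_X = f_X(V)` satisfy
`I(V; V_S | T) = 0` and `I(T; V_X) = 0`, then `I(V_S; V_X) = 0`; and symmetrically: if
`T_S = g_S(T)` and `T_X = g_X(T)` satisfy `I(T; T_S | V) = 0` and `I(V; T_X) = 0`,
then `I(T_S; T_X) = 0`. -/
theorem mutual_disentanglement
    {SV ST AS AX BS BX : Type*}
    [Fintype SV] [Nonempty SV] [MeasurableSpace SV] [MeasurableSingletonClass SV]
    [Fintype ST] [Nonempty ST] [MeasurableSpace ST] [MeasurableSingletonClass ST]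
    [Fintype AS] [Nonempty AS] [Fintype AX] [Nonempty AX]
    [Fintype BS] [Nonempty BS] [Fintype BX] [Nonempty BX]
    (μ : Measure Ω) [IsProbabilityMeasure μ]
    (V : Ω → SV) (T : Ω → ST)
    (hV : Measurable V) (hT : Measurable T)
    (fS : SV → AS) (fX : SV → AX) (gS : ST → BS) (gX : ST → BX) :
    ((CMI μ V (fun ω => fS (V ω)) T = 0 → MI μ T (fun ω => fX (V ω)) = 0 →
        MI μ (fun ω => fS (V ω)) (fun ω => fX (V ω)) = 0) ∧
      (CMI μ T (fun ω => gS (T ω)) V = 0 → MI μ V (fun ω => gX (T ω)) = 0 →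
        MI μ (fun ω => gS (T ω)) (fun ω => gX (T ω)) = 0)) := by
  constructor
  · exact fun h1 h2 => key μ V T hV hT fS fX h1 h2
  · exact fun h1 h2 => key μ T V hT hV gS gX h1 h2

end DisNCL
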